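/- Let ν ∈ [0, 1/2], η ∈ (0,1), and let σ, t ∈ ℝ. Suppose M ≥ 1, M' ∈ (M, 2M], and |∑_{M < m ≤ M'} m^{-(1+it)}| > M^{-ν}. Then there exists a real y ∈ (M, M'] such that |∑_{M < m ≤ y} m^{-(1-ν-η+it)}| > M^η / 4. -/

import Mathlib

open Finset Complex

lemma abel_aux (a : ℕ) (f : ℕ → ℂ) (w : ℕ → ℝ) (B : ℝ)
    (hw : ∀ n, a ≤ n → w (n + 1) ≤ w n) :
    ∀ b, a + 1 ≤ b → (∀ k, a < k → k ≤ b → ‖∑ m ∈ Finset.Ioc a k, f m‖ ≤ B) →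
      ‖(∑ m ∈ Finset.Ioc a b, (w m : ℂ) * f m)
          - (w b : ℂ) * ∑ m ∈ Finset.Ioc a b, f m‖ ≤ B * (w (a + 1) - w b) := by
  intro b hb
  induction b, hb using Nat.le_induction with
  | base =>
    intro _
    simp
  | succ b hb IH =>
    intro hS
    have hab : a ≤ b := le_trans (Nat.le_succ a) hb
    have hkey : (∑ m ∈ Finset.Ioc a (b + 1), (w m : ℂ) * f m)
          - (w (b + 1) : ℂ) * ∑ m ∈ Finset.Ioc a (b + 1), f m
        = ((∑ m ∈ Finset.Ioc a b, (w m : ℂ) * f m)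
            - (w b : ℂ) * ∑ m ∈ Finset.Ioc a b, f m)
          + ((w b : ℂ) - (w (b + 1) : ℂ)) * ∑ m ∈ Finset.Ioc a b, f m := by
      rw [Finset.sum_Ioc_succ_top hab, Finset.sum_Ioc_succ_top hab]
      ring
    rw [hkey]
    have h1 : ‖((∑ m ∈ Finset.Ioc a b, (w m : ℂ) * f m)
          - (w b : ℂ) * ∑ m ∈ Finset.Ioc a b, f m)
          + ((w b : ℂ) - (w (b + 1) : ℂ)) * ∑ m ∈ Finset.Ioc a b, f m‖
        ≤ ‖(∑ m ∈ Finset.Ioc a b, (w m : ℂ) * f m)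
          - (w b : ℂ) * ∑ m ∈ Finset.Ioc a b, f m‖
          + ‖((w b : ℂ) - (w (b + 1) : ℂ)) * ∑ m ∈ Finset.Ioc a b, f m‖ :=
      norm_add_le _ _
    have h2 := IH (fun k hk1 hk2 => hS k hk1 (le_trans hk2 (Nat.le_succ b)))
    have hwd : 0 ≤ w b - w (b + 1) := sub_nonneg.mpr (hw b hab)
    have h3 : ‖((w b : ℂ) - (w (b + 1) : ℂ)) * ∑ m ∈ Finset.Ioc a b, f m‖
        ≤ (w b - w (b + 1)) * B := by
      rw [norm_mul]
      have : ‖(w b : ℂ) - (w (b + 1) : ℂ)‖ = w b - w (b + 1) := by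
        rw [← Complex.ofReal_sub, Complex.norm_real, Real.norm_of_nonneg hwd]
      rw [this]
      exact mul_le_mul_of_nonneg_left (hS b hb (Nat.le_succ b)) hwd
    calc _ ≤ _ := h1
      _ ≤ B * (w (a + 1) - w b) + (w b - w (b + 1)) * B := add_le_add h2 h3
      _ = B * (w (a + 1) - w (b + 1)) := by ring

/-- Large value transfer from the line Re s = 1 to the line Re s = 1 - ν - η. -/
theorem stmt_4 (ν η t M M' : ℝ) (hν : ν ∈ Set.Icc 0 (1/2)) (hη : η ∈ Set.Ioo 0 1)
    (hM : 1 ≤ M) (hM'1 : M < M') (hM'2 : M' ≤ 2 * M)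
    (hbig : M ^ (-ν) <
      ‖∑ m ∈ Finset.Ioc ⌊M⌋₊ ⌊M'⌋₊, (m : ℂ) ^ (-((1 : ℂ) + t * Complex.I))‖) :
    ∃ y ∈ Set.Ioc M M',
      M ^ η / 4 <
        ‖∑ m ∈ Finset.Ioc ⌊M⌋₊ ⌊y⌋₊,
            (m : ℂ) ^ (-(((1 - ν - η : ℝ) : ℂ) + t * Complex.I))‖ := by
  by_contra hcon
  push_neg at hcon
  set a := ⌊M⌋₊ with ha
  set b := ⌊M'⌋₊ with hb
  have hM0 : (0 : ℝ) < M := lt_of_lt_of_le one_pos hM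
  have hνη : 0 < ν + η := add_pos_of_nonneg_of_pos hν.1 hη.1
  have hMν : 0 < M ^ (-ν) := Real.rpow_pos_of_pos hM0 _
  have ha1 : 1 ≤ a := Nat.le_floor (by exact_mod_cast hM)
  set w : ℕ → ℝ := fun n => (n : ℝ) ^ (-(ν + η)) with hwdef
  set f : ℕ → ℂ := fun m => (m : ℂ) ^ (-(((1 - ν - η : ℝ) : ℂ) + t * Complex.I)) with hfdef
  -- rewrite the big sum
  have hfw : ∀ m ∈ Finset.Ioc a b, (m : ℂ) ^ (-((1 : ℂ) + t * Complex.I))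
      = (w m : ℂ) * f m := by
    intro m hm
    have hm1 : 1 ≤ m := le_trans ha1 (Nat.le_of_lt_succ (Nat.lt_succ_of_lt (Finset.mem_Ioc.mp hm).1))
    have hm0 : (0 : ℝ) ≤ (m : ℝ) := Nat.cast_nonneg m
    have hmne : (m : ℂ) ≠ 0 := by
      exact_mod_cast Nat.cast_ne_zero.mpr (Nat.one_le_iff_ne_zero.mp hm1)
    have hsplit : -((1 : ℂ) + t * Complex.I)
        = ((-(ν + η) : ℝ) : ℂ) + (-(((1 - ν - η : ℝ) : ℂ) + t * Complex.I)) := by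
      push_cast
      ring
    rw [hsplit, Complex.cpow_add _ _ hmne]
    congr 1
    exact_mod_cast (Complex.ofReal_cpow hm0 (-(ν + η))).symm
  rw [Finset.sum_congr rfl hfw] at hbig
  -- nonempty interval
  have hab : a < b := by
    by_contra hle
    push_neg at hle
    rw [Finset.Ioc_eq_empty (not_lt.mpr hle), Finset.sum_empty, norm_zero] at hbig
    exact absurd hbig (not_lt.mpr hMν.le)
  -- partial sums are small
  have hS : ∀ k, a < k → k ≤ b → ‖∑ m ∈ Finset.Ioc a k, f m‖ ≤ M ^ η / 4 := by
    intro k hk1 hk2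
    have hyk : (k : ℝ) ∈ Set.Ioc M M' := by
      constructor
      · exact (Nat.floor_lt hM0.le).mp hk1
      · exact le_trans (by exact_mod_cast hk2) (Nat.floor_le (hM0.trans hM'1).le)
    have := hcon (k : ℝ) hyk
    rwa [Nat.floor_natCast] at this
  -- w is antitone
  have hw : ∀ n, a ≤ n → w (n + 1) ≤ w n := by
    intro n hn
    have hn0 : (0 : ℝ) < (n : ℝ) := by
      exact_mod_cast lt_of_lt_of_le Nat.zero_lt_one (le_trans ha1 hn)
    apply Real.rpow_le_rpow_of_nonpos hn0 (by push_cast; linarith) (by linarith)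
  have key := abel_aux a f w (M ^ η / 4) hw b hab hS
  -- bound the big sum
  have hB0 : (0 : ℝ) ≤ M ^ η / 4 := by positivity
  have hT : ‖∑ m ∈ Finset.Ioc a b, (w m : ℂ) * f m‖
      ≤ M ^ η / 4 * w (a + 1) := by
    have h4 : ‖(w b : ℂ) * ∑ m ∈ Finset.Ioc a b, f m‖ ≤ w b * (M ^ η / 4) := by
      rw [norm_mul, Complex.norm_real, Real.norm_of_nonneg (by positivity)]
      exact mul_le_mul_of_nonneg_left (hS b hab le_rfl) (by positivity)
    calc ‖∑ m ∈ Finset.Ioc a b, (w m : ℂ) * f m‖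
        ≤ ‖(∑ m ∈ Finset.Ioc a b, (w m : ℂ) * f m)
            - (w b : ℂ) * ∑ m ∈ Finset.Ioc a b, f m‖
          + ‖(w b : ℂ) * ∑ m ∈ Finset.Ioc a b, f m‖ := by
          have h := norm_add_le ((∑ m ∈ Finset.Ioc a b, (w m : ℂ) * f m)
              - (w b : ℂ) * ∑ m ∈ Finset.Ioc a b, f m)
            ((w b : ℂ) * ∑ m ∈ Finset.Ioc a b, f m)
          simpa using h
      _ ≤ M ^ η / 4 * (w (a + 1) - w b) + w b * (M ^ η / 4) := add_le_add key h4
      _ = M ^ η / 4 * w (a + 1) := by ring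
  -- w (a+1) ≤ M ^ (-(ν+η))
  have hwa : w (a + 1) ≤ M ^ (-(ν + η)) := by
    have hMa : M ≤ ((a + 1 : ℕ) : ℝ) := by
      push_cast
      exact (Nat.lt_floor_add_one M).le
    exact Real.rpow_le_rpow_of_nonpos hM0 hMa (by linarith)
  have hfinal : M ^ η / 4 * w (a + 1) ≤ M ^ (-ν) / 4 := by
    calc M ^ η / 4 * w (a + 1) ≤ M ^ η / 4 * M ^ (-(ν + η)) :=
          mul_le_mul_of_nonneg_left hwa hB0
      _ = M ^ (-ν) / 4 := by
          rw [div_mul_eq_mul_div, ← Real.rpow_add hM0]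
          norm_num
  linarith [hbig, hT, hfinal, hMν]
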